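/- arXiv:1012.5631 — 2 statements merged into one kernel-verified Lean document; each statement's English description precedes it below -/
import Mathlib

section
/- Let p be a prime, S a group, and R a normal subgroup of S with R ≤ S^{(2)}. Assume R^{(2,S)} = R ∩ S^{(3)}. Then the following are equivalent: (1) R^{(3,S)} = R ∩ S^{(4)}; (2) R^{(3,S)} = R^{(2,S)} ∩ S^{(4)}; (3) every group homomorphism φ : R^{(2,S)} → ℤ/pℤ whose kernel contains R^{(3,S)} also has R^{(2,S)} ∩ S^{(4)} contained in its kernel; (4) every group homomorphism φ : R^{(2,S)} → ℤ/pℤ whose kernel contains R^{(3,S)} is the restriction to R^{(2,S)} of a group homomorphism ψ : S^{(3)} → ℤ/pℤ whose kernel contains S^{(4)}. -/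
open scoped commutatorElement

/-- The subgroup generated by all `p`-th powers of elements of `H` together with all
commutators `⁅h, g⁆ = h * g * h⁻¹ * g⁻¹` with `h ∈ H` and `g` in the ambient group. -/
def pStep (p : ℕ) {G : Type*} [Group G] (H : Subgroup G) : Subgroup G :=
  Subgroup.closure ({x : G | ∃ h ∈ H, x = h ^ p} ∪ {x : G | ∃ h ∈ H, ∃ g : G, x = ⁅h, g⁆})

/-- `pSeries p H n` is the filtration `H^{(n,G)}`: `H^{(1,G)} = H` and
`H^{(n+1,G)} = (H^{(n,G)})^p [H^{(n,G)}, G]`.  Taking `H = ⊤` gives the lower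
`p`-central series `G^{(n)}` of `G` (with `G^{(1)} = G`). -/
def pSeries (p : ℕ) {G : Type*} [Group G] (H : Subgroup G) : ℕ → Subgroup G
  | 0 => H
  | 1 => H
  | (n + 2) => pStep p (pSeries p H (n + 1))

section Basic

variable {p : ℕ} {S : Type*} [Group S]

lemma pow_mem_pStep {H : Subgroup S} {h : S} (hh : h ∈ H) : h ^ p ∈ pStep p H :=
  Subgroup.subset_closure (Or.inl ⟨h, hh, rfl⟩)

lemma commutator_mem_pStep {H : Subgroup S} {h : S} (hh : h ∈ H) (g : S) :
    ⁅h, g⁆ ∈ pStep p H :=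
  Subgroup.subset_closure (Or.inr ⟨h, hh, g, rfl⟩)

lemma pStep_mono {H K : Subgroup S} (h : H ≤ K) : pStep p H ≤ pStep p K := by
  apply Subgroup.closure_mono
  rintro x (⟨a, ha, rfl⟩ | ⟨a, ha, g, rfl⟩)
  · exact Or.inl ⟨a, h ha, rfl⟩
  · exact Or.inr ⟨a, h ha, g, rfl⟩

lemma pStep_le {H : Subgroup S} (hn : H.Normal) : pStep p H ≤ H := by
  rw [pStep, Subgroup.closure_le]
  rintro x (⟨a, ha, rfl⟩ | ⟨a, ha, g, rfl⟩)
  · exact pow_mem ha p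
  · have : ⁅a, g⁆ = a * (g * a⁻¹ * g⁻¹) := by group
    rw [this]
    exact mul_mem ha (hn.conj_mem _ (inv_mem ha) g)

lemma pStep_normal {H : Subgroup S} (hn : H.Normal) : (pStep p H).Normal := by
  refine ⟨fun n hnm g => ?_⟩
  have h1 : (pStep p H).map (MulAut.conj g).toMonoidHom ≤ pStep p H := by
    rw [pStep, MonoidHom.map_closure]
    apply Subgroup.closure_mono
    rintro x ⟨y, (⟨a, ha, rfl⟩ | ⟨a, ha, k, rfl⟩), rfl⟩
    · exact Or.inl ⟨g * a * g⁻¹, hn.conj_mem a ha g, by simp [conj_pow]⟩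
    · refine Or.inr ⟨g * a * g⁻¹, hn.conj_mem a ha g, g * k * g⁻¹, ?_⟩
      simp only [MulEquiv.coe_toMonoidHom, MulAut.conj_apply, commutatorElement_def]
      group
  exact h1 ⟨n, hnm, rfl⟩

end Basic

section Aux

variable (p : ℕ) [Fact p.Prime] {G : Type*} [Group G] (M : Subgroup G) [M.Normal]

lemma quot_comm (hcomm : ∀ a b : G, ⁅a, b⁆ ∈ M) (a b : G ⧸ M) : a * b = b * a := by
  induction a using QuotientGroup.induction_on with
  | H a =>
  induction b using QuotientGroup.induction_on with
  | H b =>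
  rw [← QuotientGroup.mk_mul, ← QuotientGroup.mk_mul, QuotientGroup.eq]
  have : (a * b)⁻¹ * (b * a) = ⁅b⁻¹, a⁻¹⁆ := by group
  rw [this]
  exact hcomm _ _

lemma quot_pow (hpow : ∀ a : G, a ^ p ∈ M) (a : G ⧸ M) : a ^ p = 1 := by
  induction a using QuotientGroup.induction_on with
  | H a =>
  have h : ((a ^ p : G) : G ⧸ M) = 1 := (QuotientGroup.eq_one_iff _).mpr (hpow a)
  simpa using h


lemma aux_sep (hcomm : ∀ a b : G, ⁅a, b⁆ ∈ M) (hpow : ∀ a : G, a ^ p ∈ M)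
    {x : G} (hx : x ∉ M) :
    ∃ φ : G →* Multiplicative (ZMod p), M ≤ φ.ker ∧ φ x ≠ 1 := by
  letI instCG : CommGroup (G ⧸ M) :=
    { (inferInstance : Group (G ⧸ M)) with mul_comm := quot_comm M hcomm }
  haveI instMod : Module (ZMod p) (Additive (G ⧸ M)) := AddCommGroup.zmodModule (by
    intro q
    have := quot_pow p M hpow (Additive.toMul q)
    simpa using congrArg Additive.ofMul this)
  have hv : (Additive.ofMul (QuotientGroup.mk x : G ⧸ M) : Additive (G ⧸ M)) ≠ 0 := by
    intro h0
    exact hx ((QuotientGroup.eq_one_iff x).mp h0)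
  obtain ⟨f, hf⟩ : ∃ f : Additive (G ⧸ M) →ₗ[ZMod p] ZMod p, f (Additive.ofMul (QuotientGroup.mk x)) ≠ 0 := by
    by_contra h
    push_neg at h
    exact hv ((Module.forall_dual_apply_eq_zero_iff (ZMod p) _).mp h)
  refine ⟨(AddMonoidHom.toMultiplicativeRight f.toAddMonoidHom).comp (QuotientGroup.mk' M), ?_, ?_⟩
  · intro m hm
    have h1 : (QuotientGroup.mk m : G ⧸ M) = 1 := (QuotientGroup.eq_one_iff _).mpr hm
    simp [MonoidHom.mem_ker, h1, map_zero]
  · simpa using hf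

lemma aux_ext (hcomm : ∀ a b : G, ⁅a, b⁆ ∈ M) (hpow : ∀ a : G, a ^ p ∈ M)
    (H : Subgroup G) (φ : ↥H →* Multiplicative (ZMod p))
    (hker : ∀ h : ↥H, (h : G) ∈ M → φ h = 1) :
    ∃ ψ : G →* Multiplicative (ZMod p), (∀ g ∈ M, ψ g = 1) ∧ ∀ h : ↥H, ψ h = φ h := by
  letI instCG : CommGroup (G ⧸ M) :=
    { (inferInstance : Group (G ⧸ M)) with mul_comm := quot_comm M hcomm }
  haveI instMod : Module (ZMod p) (Additive (G ⧸ M)) := AddCommGroup.zmodModule (by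
    intro q
    have := quot_pow p M hpow (Additive.toMul q)
    simpa using congrArg Additive.ofMul this)
  set π : G →* G ⧸ M := QuotientGroup.mk' M with hπ
  set ρ : ↥H →* G ⧸ M := π.comp H.subtype with hρ
  -- key : ρ h = ρ h' → φ h = φ h'
  have key : ∀ h h' : ↥H, ρ h = ρ h' → φ h = φ h' := by
    intro h h' he
    have hm : ((h * h'⁻¹ : ↥H) : G) ∈ M := by
      have : π ((h : G) * (h' : G)⁻¹) = 1 := by
        simp only [map_mul, map_inv]
        rw [show π (h : G) = ρ h from rfl, show π (h' : G) = ρ h' from rfl, he]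
        simp
      rwa [hπ, QuotientGroup.mk'_apply, QuotientGroup.eq_one_iff] at this
    have := hker _ hm
    rw [map_mul, map_inv] at this
    rw [← mul_inv_eq_one]
    exact this
  -- φbar on the range of ρ
  have hmem : ∀ w : ↥ρ.range, ∃ h : ↥H, ρ h = (w : G ⧸ M) := fun w => w.2
  set φbar' : ↥ρ.range → Multiplicative (ZMod p) :=
    fun w => φ (Classical.choose (hmem w)) with hφbar'
  have hφbar'_eq : ∀ (w : ↥ρ.range) (h : ↥H), ρ h = (w : G ⧸ M) → φbar' w = φ h := by
    intro w h hw
    exact key _ _ ((Classical.choose_spec (hmem w)).trans hw.symm)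
  have hφmul : ∀ w₁ w₂ : ↥ρ.range, φbar' (w₁ * w₂) = φbar' w₁ * φbar' w₂ := by
    intro w₁ w₂
    obtain ⟨h₁, hh₁⟩ := hmem w₁
    obtain ⟨h₂, hh₂⟩ := hmem w₂
    rw [hφbar'_eq w₁ h₁ hh₁, hφbar'_eq w₂ h₂ hh₂, ← map_mul]
    refine hφbar'_eq _ (h₁ * h₂) ?_
    simp [map_mul, hh₁, hh₂]
  set φbar : ↥ρ.range →* Multiplicative (ZMod p) := MonoidHom.mk' φbar' hφmul
  -- the submodule corresponding to ρ.range
  set W : Submodule (ZMod p) (Additive (G ⧸ M)) :=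
    AddSubgroup.toZModSubmodule p (Subgroup.toAddSubgroup ρ.range) with hW
  have hWmem : ∀ v : Additive (G ⧸ M), v ∈ W ↔ (Additive.toMul v) ∈ ρ.range :=
    fun v => by exact Iff.rfl
  set f₀' : ↥W →+ ZMod p := AddMonoidHom.mk'
    (fun w => Multiplicative.toAdd (φbar ⟨Additive.toMul w.1, (hWmem w.1).mp w.2⟩))
    (by
      intro w₁ w₂
      show Multiplicative.toAdd (φbar ⟨Additive.toMul w₁.1 * Additive.toMul w₂.1, _⟩) = _
      rw [show (⟨Additive.toMul w₁.1 * Additive.toMul w₂.1, _⟩ : ↥ρ.range)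
          = ⟨Additive.toMul w₁.1, (hWmem w₁.1).mp w₁.2⟩ * ⟨Additive.toMul w₂.1, (hWmem w₂.1).mp w₂.2⟩
          from rfl, map_mul]
      rfl) with hf₀'
  set f₀ : ↥W →ₗ[ZMod p] ZMod p := AddMonoidHom.toZModLinearMap p f₀'
  obtain ⟨W₂, hW₂⟩ := W.exists_isCompl
  set f : Additive (G ⧸ M) →ₗ[ZMod p] ZMod p := f₀ ∘ₗ (W.linearProjOfIsCompl W₂ hW₂)
  refine ⟨(AddMonoidHom.toMultiplicativeRight f.toAddMonoidHom).comp π, ?_, ?_⟩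
  · intro g hg
    have h1 : π g = 1 := by
      rw [hπ, QuotientGroup.mk'_apply, QuotientGroup.eq_one_iff]
      exact hg
    simp [h1]
  · intro h
    have hmem2 : (Additive.ofMul (π (h : G)) : Additive (G ⧸ M)) ∈ W := by
      rw [hWmem]
      exact ⟨h, rfl⟩
    have hproj : W.linearProjOfIsCompl W₂ hW₂ (Additive.ofMul (π (h : G)))
        = ⟨Additive.ofMul (π (h : G)), hmem2⟩ :=
      Submodule.linearProjOfIsCompl_apply_left hW₂ ⟨Additive.ofMul (π (h : G)), hmem2⟩
    show Multiplicative.ofAdd (f (Additive.ofMul (π (h : G)))) = φ h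
    rw [LinearMap.comp_apply, hproj]
    show Multiplicative.ofAdd (Multiplicative.toAdd (φbar ⟨_, _⟩)) = φ h
    rw [ofAdd_toAdd]
    exact hφbar'_eq _ h rfl

end Aux


/-- Lemma 2.3: assume `R` is a normal subgroup of `S` with `R ≤ S^{(2)}` and
`R^{(2,S)} = R ∩ S^{(3)}`.  Then the following are equivalent:
(1) `R^{(3,S)} = R ∩ S^{(4)}`;
(2) `R^{(3,S)} = R^{(2,S)} ∩ S^{(4)}`;
(3) every homomorphism `φ : R^{(2,S)} → ℤ/pℤ` killing `R^{(3,S)}` kills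
    `R^{(2,S)} ∩ S^{(4)}`;
(4) every homomorphism `φ : R^{(2,S)} → ℤ/pℤ` killing `R^{(3,S)}` is the restriction of a
    homomorphism `ψ : S^{(3)} → ℤ/pℤ` killing `S^{(4)}`. -/
theorem stmt3 (p : ℕ) (hp : p.Prime) {S : Type*} [Group S] (R : Subgroup S) [R.Normal]
    (hR : R ≤ pSeries p (⊤ : Subgroup S) 2)
    (h2 : pSeries p R 2 = R ⊓ pSeries p (⊤ : Subgroup S) 3) :
    List.TFAE
      [ pSeries p R 3 = R ⊓ pSeries p (⊤ : Subgroup S) 4,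
        pSeries p R 3 = pSeries p R 2 ⊓ pSeries p (⊤ : Subgroup S) 4,
        ∀ φ : ↥(pSeries p R 2) →* Multiplicative (ZMod p),
          (pSeries p R 3).subgroupOf (pSeries p R 2) ≤ φ.ker →
          (pSeries p R 2 ⊓ pSeries p (⊤ : Subgroup S) 4).subgroupOf (pSeries p R 2) ≤ φ.ker,
        ∀ φ : ↥(pSeries p R 2) →* Multiplicative (ZMod p),
          (pSeries p R 3).subgroupOf (pSeries p R 2) ≤ φ.ker →
          ∃ ψ : ↥(pSeries p (⊤ : Subgroup S) 3) →* Multiplicative (ZMod p),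
            (pSeries p (⊤ : Subgroup S) 4).subgroupOf (pSeries p (⊤ : Subgroup S) 3) ≤ ψ.ker ∧
            ∀ (x : S) (hx2 : x ∈ pSeries p R 2) (hx3 : x ∈ pSeries p (⊤ : Subgroup S) 3),
              ψ ⟨x, hx3⟩ = φ ⟨x, hx2⟩ ] := by
  haveI : Fact p.Prime := ⟨hp⟩
  haveI instAn : (pSeries p R 2).Normal := pStep_normal (inferInstanceAs R.Normal)
  haveI instBn : (pSeries p R 3).Normal := pStep_normal instAn
  haveI instT2n : (pSeries p (⊤ : Subgroup S) 2).Normal := pStep_normal (inferInstanceAs (⊤ : Subgroup S).Normal)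
  haveI instT3n : (pSeries p (⊤ : Subgroup S) 3).Normal := pStep_normal instT2n
  haveI instT4n : (pSeries p (⊤ : Subgroup S) 4).Normal := pStep_normal instT3n
  have hBA : pSeries p R 3 ≤ pSeries p R 2 := pStep_le instAn
  have hAT3 : pSeries p R 2 ≤ pSeries p (⊤ : Subgroup S) 3 := pStep_mono hR
  have hBT4 : pSeries p R 3 ≤ pSeries p (⊤ : Subgroup S) 4 := pStep_mono hAT3
  have hT43 : pSeries p (⊤ : Subgroup S) 4 ≤ pSeries p (⊤ : Subgroup S) 3 := pStep_le instT3n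
  tfae_have 1 ↔ 2 := by
    rw [h2, inf_assoc, inf_eq_right.mpr hT43]
  tfae_have 2 → 3 := by
    intro h φ hφ
    rw [← h]
    exact hφ
  tfae_have 3 → 2 := by
    intro h3
    refine le_antisymm (le_inf hBA hBT4) ?_
    intro x hx
    by_contra hxB
    have hxA : x ∈ pSeries p R 2 := hx.1
    have hcomm : ∀ a b : ↥(pSeries p R 2),
        ⁅a, b⁆ ∈ (pSeries p R 3).subgroupOf (pSeries p R 2) := by
      intro a b
      rw [Subgroup.mem_subgroupOf]
      have hc : ((⁅a, b⁆ : ↥(pSeries p R 2)) : S) = ⁅(a : S), (b : S)⁆ := rfl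
      rw [hc]
      exact commutator_mem_pStep a.2 (b : S)
    have hpow : ∀ a : ↥(pSeries p R 2),
        a ^ p ∈ (pSeries p R 3).subgroupOf (pSeries p R 2) := by
      intro a
      rw [Subgroup.mem_subgroupOf]
      have hc : ((a ^ p : ↥(pSeries p R 2)) : S) = (a : S) ^ p := rfl
      rw [hc]
      exact pow_mem_pStep a.2
    obtain ⟨φ, hφker, hφx⟩ := aux_sep p ((pSeries p R 3).subgroupOf (pSeries p R 2))
      hcomm hpow (x := ⟨x, hxA⟩) (fun hmem => hxB hmem)
    exact hφx (h3 φ hφker (by exact hx : (⟨x, hxA⟩ : ↥(pSeries p R 2)) ∈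
      (pSeries p R 2 ⊓ pSeries p (⊤ : Subgroup S) 4).subgroupOf (pSeries p R 2)))
  tfae_have 3 → 4 := by
    intro h3 φ hφ
    have hcomm : ∀ a b : ↥(pSeries p (⊤ : Subgroup S) 3),
        ⁅a, b⁆ ∈ (pSeries p (⊤ : Subgroup S) 4).subgroupOf (pSeries p (⊤ : Subgroup S) 3) := by
      intro a b
      rw [Subgroup.mem_subgroupOf]
      have hc : ((⁅a, b⁆ : ↥(pSeries p (⊤ : Subgroup S) 3)) : S) = ⁅(a : S), (b : S)⁆ := rfl
      rw [hc]
      exact commutator_mem_pStep a.2 (b : S)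
    have hpow : ∀ a : ↥(pSeries p (⊤ : Subgroup S) 3),
        a ^ p ∈ (pSeries p (⊤ : Subgroup S) 4).subgroupOf (pSeries p (⊤ : Subgroup S) 3) := by
      intro a
      rw [Subgroup.mem_subgroupOf]
      have hc : ((a ^ p : ↥(pSeries p (⊤ : Subgroup S) 3)) : S) = (a : S) ^ p := rfl
      rw [hc]
      exact pow_mem_pStep a.2
    have hker : ∀ h : ↥((pSeries p R 2).subgroupOf (pSeries p (⊤ : Subgroup S) 3)),
        ((h : ↥(pSeries p (⊤ : Subgroup S) 3)) : ↥(pSeries p (⊤ : Subgroup S) 3)) ∈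
          (pSeries p (⊤ : Subgroup S) 4).subgroupOf (pSeries p (⊤ : Subgroup S) 3) →
        (φ.comp (Subgroup.subgroupOfEquivOfLe hAT3).toMonoidHom) h = 1 := by
      intro h hm
      have hmem : (⟨((h : ↥(pSeries p (⊤ : Subgroup S) 3)) : S), h.2⟩ : ↥(pSeries p R 2)) ∈
          (pSeries p R 2 ⊓ pSeries p (⊤ : Subgroup S) 4).subgroupOf (pSeries p R 2) := by
        rw [Subgroup.mem_subgroupOf]
        exact ⟨h.2, hm⟩
      have := h3 φ hφ hmem
      rw [MonoidHom.mem_ker] at this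
      exact this
    obtain ⟨ψ, hψ1, hψ2⟩ := aux_ext p
      ((pSeries p (⊤ : Subgroup S) 4).subgroupOf (pSeries p (⊤ : Subgroup S) 3)) hcomm hpow
      ((pSeries p R 2).subgroupOf (pSeries p (⊤ : Subgroup S) 3))
      (φ.comp (Subgroup.subgroupOfEquivOfLe hAT3).toMonoidHom) hker
    refine ⟨ψ, ?_, ?_⟩
    · intro g hg
      rw [MonoidHom.mem_ker]
      exact hψ1 g hg
    · intro x hx2 hx3
      have := hψ2 ⟨⟨x, hx3⟩, (by exact hx2 : (⟨x, hx3⟩ : ↥(pSeries p (⊤ : Subgroup S) 3)) ∈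
        (pSeries p R 2).subgroupOf (pSeries p (⊤ : Subgroup S) 3))⟩
      rw [this]
      rfl
  tfae_have 4 → 3 := by
    intro h4 φ hφ x hx
    obtain ⟨ψ, hψker, hψres⟩ := h4 φ hφ
    have hx' : (x : S) ∈ pSeries p R 2 ⊓ pSeries p (⊤ : Subgroup S) 4 := hx
    have hx3 : (x : S) ∈ pSeries p (⊤ : Subgroup S) 3 := hT43 hx'.2
    have e1 : φ x = ψ ⟨(x : S), hx3⟩ := by
      rw [hψres (x : S) hx'.1 hx3]
    rw [MonoidHom.mem_ker, e1]
    have : (⟨(x : S), hx3⟩ : ↥(pSeries p (⊤ : Subgroup S) 3)) ∈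
        (pSeries p (⊤ : Subgroup S) 4).subgroupOf (pSeries p (⊤ : Subgroup S) 3) := hx'.2
    exact hψker this
  tfae_finish
end

section
/- Let p be a prime, S the free group on three generators x₁, x₂, x₃, let w = [[x₁,x₂],x₃] be the iterated commutator, and let R be the normal closure of w in S. Then w ∈ R ∩ S^{(3)} but w ∉ R^{(2,S)} = R^p[R,S]; in particular R^{(2,S)} ≠ R ∩ S^{(3)}. -/
open scoped commutatorElement

section
variable {A : Type*} [Ring A]

private lemma helper1 (a b : A) (ha : a * a = 0) (hb : b * b = 0) (hba : b * a = 0) :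
    (1 + a) * (1 + b) * (1 - a) * (1 - b) = 1 + a * b := by
  noncomm_ring
  simp [← mul_assoc, ha, hb, hba]

private lemma helper2 (a b : A) (hab : a * b = 0) (hba : b * a = 0) :
    Commute (1 + a) (1 + b) := by
  unfold Commute SemiconjBy
  noncomm_ring
  simp [hab, hba]

private lemma helper3 (a : A) (h : a * a = 0) : (1 - a) * (1 + a) = 1 := by
  noncomm_ring; simp [h]

private lemma helper3' (a : A) (h : a * a = 0) : (1 + a) * (1 - a) = 1 := by
  noncomm_ring; simp [h]
end

open Matrix

private lemma pow_eq_zero_sq {A : Type*} [MonoidWithZero A] {a : A} (h : a * a = 0)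
    {n : ℕ} (hn : 2 ≤ n) : a ^ n = 0 := by
  obtain ⟨k, rfl⟩ := Nat.exists_eq_add_of_le hn
  rw [pow_add, pow_two, h, zero_mul]

private abbrev Mp (p : ℕ) := Matrix (Fin 4) (Fin 4) (ZMod p)

private def E (p : ℕ) (i j : Fin 4) : Mp p := single i j 1

private lemma E_mul_ne (p : ℕ) {i j k l : Fin 4} (h : j ≠ k) : E p i j * E p k l = 0 :=
  single_mul_single_of_ne _ _ _ _ h _

private lemma E_mul_same (p : ℕ) (i j k : Fin 4) : E p i j * E p j k = E p i k := by
  simp [E, single_mul_single_same]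

private def uE (p : ℕ) (i j : Fin 4) (h : j ≠ i) : (Mp p)ˣ where
  val := 1 + E p i j
  inv := 1 - E p i j
  val_inv := helper3' _ (E_mul_ne p h)
  inv_val := helper3 _ (E_mul_ne p h)

private lemma uE_comm (p : ℕ) {i j k : Fin 4} (hji : j ≠ i) (hkj : k ≠ j) (hki : k ≠ i) :
    ⁅uE p i j hji, uE p j k hkj⁆ = uE p i k hki := by
  apply Units.ext
  rw [commutatorElement_def, Units.val_mul, Units.val_mul, Units.val_mul]
  show (1 + E p i j) * (1 + E p j k) * (1 - E p i j) * (1 - E p j k) = 1 + E p i k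
  rw [helper1 _ _ (E_mul_ne p hji) (E_mul_ne p hkj) (E_mul_ne p hki), E_mul_same]

private lemma uE_commute (p : ℕ) {i j k l : Fin 4} (hji : j ≠ i) (hlk : l ≠ k)
    (h1 : j ≠ k) (h2 : l ≠ i) : Commute (uE p i j hji) (uE p k l hlk) := by
  have h := helper2 (E p i j) (E p k l) (E_mul_ne p h1) (E_mul_ne p h2)
  exact Units.ext h

section
variable (p : ℕ) [Fact p.Prime]

private def Zu : (Mp p)ˣ := uE p 0 3 (by decide)
private def Au : (Mp p)ˣ := uE p 0 1 (by decide)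
private def Bu : (Mp p)ˣ := uE p 1 2 (by decide)
private def Cu : (Mp p)ˣ := uE p 2 3 (by decide)

private lemma Zu_ne_one : Zu p ≠ 1 := by
  haveI : Fact (1 < p) := ⟨(Fact.out : p.Prime).one_lt⟩
  intro h
  have h2 := congrArg (fun u : (Mp p)ˣ => u.val 0 3) h
  simp only [Zu, uE, Units.val_one, Matrix.add_apply, E] at h2
  rw [Matrix.one_apply_ne (by decide : (0 : Fin 4) ≠ 3), single_apply_same,
    zero_add] at h2
  exact one_ne_zero h2

private lemma Zu_pow_p : (Zu p) ^ p = 1 := by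
  apply Units.ext
  rw [Units.val_pow_eq_pow_val, Units.val_one]
  show (1 + E p 0 3) ^ p = 1
  have hc : Commute (1 : Mp p) (E p 0 3) := Commute.one_left _
  rw [add_pow_char_of_commute p hc, one_pow,
    pow_eq_zero_sq (E_mul_ne p (by decide)) (Fact.out : p.Prime).two_le, add_zero]

private lemma Zu_commutes : Commute (Zu p) (Au p) ∧ Commute (Zu p) (Bu p) ∧
    Commute (Zu p) (Cu p) := by
  refine ⟨?_, ?_, ?_⟩ <;> exact uE_commute p _ _ (by decide) (by decide)

end

/-- Example B: let `S` be the free group on three generators `x₁, x₂, x₃`, let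
`w = ⁅⁅x₁, x₂⁆, x₃⁆`, and let `R` be the normal closure of `w` in `S`.  Then
`w ∈ R ∩ S^{(3)}` but `w ∉ R^{(2,S)} = R^p[R,S]`; in particular
`R^{(2,S)} ≠ R ∩ S^{(3)}`. -/
theorem stmt8 (p : ℕ) (hp : p.Prime) (w : FreeGroup (Fin 3))
    (hw : w = ⁅⁅FreeGroup.of (0 : Fin 3), FreeGroup.of (1 : Fin 3)⁆, FreeGroup.of (2 : Fin 3)⁆)
    (R : Subgroup (FreeGroup (Fin 3))) (hR : R = Subgroup.normalClosure {w}) :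
    w ∈ R ⊓ pSeries p (⊤ : Subgroup (FreeGroup (Fin 3))) 3 ∧
    w ∉ pSeries p R 2 ∧
    pSeries p R 2 ≠ R ⊓ pSeries p (⊤ : Subgroup (FreeGroup (Fin 3))) 3 := by
  haveI : Fact p.Prime := ⟨hp⟩
  have hwR : w ∈ R := hR ▸ Subgroup.subset_normalClosure (Set.mem_singleton w)
  have h12 : ⁅FreeGroup.of (0 : Fin 3), FreeGroup.of (1 : Fin 3)⁆ ∈
      pStep p (⊤ : Subgroup (FreeGroup (Fin 3))) :=
    Subgroup.subset_closure (Or.inr ⟨_, trivial, _, rfl⟩)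
  have hwS3 : w ∈ pSeries p (⊤ : Subgroup (FreeGroup (Fin 3))) 3 :=
    Subgroup.subset_closure (Or.inr ⟨_, h12, _, hw⟩)
  set φ : FreeGroup (Fin 3) →* (Mp p)ˣ :=
    FreeGroup.lift (fun i : Fin 3 => ![Au p, Bu p, Cu p] i) with hφdef
  have hφof : ∀ x : Fin 3, φ (FreeGroup.of x) = ![Au p, Bu p, Cu p] x :=
    fun x => FreeGroup.lift_apply_of
  have hφw : φ w = Zu p := by
    rw [hw, map_commutatorElement, map_commutatorElement, hφof, hφof, hφof]
    show ⁅⁅Au p, Bu p⁆, Cu p⁆ = Zu p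
    rw [Au, Bu, Cu, Zu, uE_comm p (by decide) (by decide) (by decide),
      uE_comm p (by decide) (by decide) (by decide)]
  obtain ⟨hZA, hZB, hZC⟩ := Zu_commutes p
  have hcom : ∀ u : FreeGroup (Fin 3), Commute (Zu p) (φ u) := by
    intro u
    induction u using FreeGroup.induction_on with
    | C1 => rw [_root_.map_one]; exact Commute.one_right _
    | of x =>
      rw [hφof]
      fin_cases x
      · exact hZA
      · exact hZB
      · exact hZC
    | inv_of x ih => rw [map_inv]; exact ih.inv_right
    | mul x y ihx ihy => rw [_root_.map_mul]; exact ihx.mul_right ihy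
  haveI hN : ((Subgroup.zpowers (Zu p)).comap φ).Normal := by
    constructor
    intro n hn g
    rw [Subgroup.mem_comap] at hn ⊢
    obtain ⟨k, hk⟩ := Subgroup.mem_zpowers_iff.1 hn
    refine Subgroup.mem_zpowers_iff.2 ⟨k, ?_⟩
    have hc := (hcom g).zpow_left k
    rw [_root_.map_mul, _root_.map_mul, map_inv, ← hk, ← hc.eq, mul_inv_cancel_right]
  have hRle : R ≤ (Subgroup.zpowers (Zu p)).comap φ := by
    rw [hR]
    refine Subgroup.normalClosure_le_normal ?_
    intro x hx
    rw [Set.mem_singleton_iff] at hx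
    subst hx
    exact Subgroup.mem_comap.2 (hφw ▸ Subgroup.mem_zpowers _)
  have hker : pSeries p R 2 ≤ φ.ker := by
    show pStep p R ≤ φ.ker
    refine (Subgroup.closure_le _).2 ?_
    rintro x (⟨r, hr, rfl⟩ | ⟨r, hr, g, rfl⟩)
    · obtain ⟨k, hk⟩ := Subgroup.mem_zpowers_iff.1 (hRle hr)
      have : φ (r ^ p) = 1 := by
        rw [map_pow, ← hk, ← zpow_natCast, ← _root_.zpow_mul, mul_comm k (p : ℤ),
          _root_.zpow_mul, zpow_natCast, Zu_pow_p, _root_.one_zpow]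
      exact SetLike.mem_coe.mpr (MonoidHom.mem_ker.mpr this)
    · obtain ⟨k, hk⟩ := Subgroup.mem_zpowers_iff.1 (hRle hr)
      have : φ ⁅r, g⁆ = 1 := by
        rw [map_commutatorElement, ← hk]
        exact ((hcom g).zpow_left k).commutator_eq
      exact SetLike.mem_coe.mpr (MonoidHom.mem_ker.mpr this)
  have hw2 : w ∉ pSeries p R 2 := by
    intro hmem
    have h1 : φ w = 1 := hker hmem
    rw [hφw] at h1
    exact Zu_ne_one p h1
  refine ⟨Subgroup.mem_inf.2 ⟨hwR, hwS3⟩, hw2, ?_⟩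
  intro heq
  exact hw2 (heq.symm ▸ Subgroup.mem_inf.2 ⟨hwR, hwS3⟩)
end
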